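/- Consider the scalar ODE ζ'(t) = −(t/(1+t²))·((1+ζ)/(1/(d+1)+ζ))·ζ for t ≥ t₀ > 0. Every solution with initial data ζ(t₀) ∈ (−1/(d+1), ∞) exists globally for t ≥ t₀ and satisfies |ζ(t)| ≲ 1/√(1+t²); in particular ζ(t) → 0 as t → ∞. -/

import Mathlib

open Set Filter Real Topology


lemma stmt12_inv (a t₀ z₀ : ℝ) (ha0 : 0 < a) (ha1 : a ≤ 1) (ht₀ : 0 < t₀) (hz : -a < z₀)
    (ζ : ℝ → ℝ) (hζ0 : ζ t₀ = z₀)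
    (hode : ∀ t ∈ Ici t₀, HasDerivWithinAt ζ
      (-(t / (1 + t ^ 2)) * ((1 + ζ t) / (a + ζ t)) * ζ t) (Ici t₀) t) :
    ∀ t ∈ Ici t₀, -a < ζ t := by
  have hcont : ContinuousOn ζ (Ici t₀) := fun t ht => (hode t ht).continuousWithinAt
  have hDA : ∀ x, t₀ < x → HasDerivAt ζ
      (-(x / (1 + x ^ 2)) * ((1 + ζ x) / (a + ζ x)) * ζ x) x :=
    fun x hx => (hode x (le_of_lt hx)).hasDerivAt (Ici_mem_nhds hx)
  by_contra hcon
  push_neg at hcon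
  obtain ⟨t₁, ht₁, hζt₁⟩ := hcon
  set A := Icc t₀ t₁ ∩ ζ ⁻¹' (Iic (-a)) with hA
  have hAne : A.Nonempty := ⟨t₁, ⟨ht₁, le_refl t₁⟩, hζt₁⟩
  have hAclosed : IsClosed A :=
    (hcont.mono Icc_subset_Ici_self).preimage_isClosed_of_isClosed isClosed_Icc isClosed_Iic
  have hAbdd : BddBelow A := ⟨t₀, fun x hx => hx.1.1⟩
  set s := sInf A with hs
  have hsA : s ∈ A := hAclosed.csInf_mem hAne hAbdd
  have hst₀ : t₀ ≤ s := hsA.1.1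
  have hζs : ζ s ≤ -a := hsA.2
  have hst : t₀ < s := by
    rcases eq_or_lt_of_le hst₀ with h | h
    · exfalso; rw [← h, hζ0] at hζs; linarith
    · exact h
  have hbefore : ∀ u, t₀ ≤ u → u < s → -a < ζ u := by
    intro u hu1 hu2
    by_contra h
    push_neg at h
    have hu : u ∈ A := ⟨⟨hu1, le_trans hu2.le hsA.1.2⟩, h⟩
    exact absurd (csInf_le hAbdd hu) (not_le.2 hu2)
  set m := min z₀ 0 with hm
  have hcm : -a < m := lt_min hz (by linarith)
  set c' := (-a + m)/2 with hc'
  have hc'1 : -a < c' := by rw [hc']; linarith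
  have hc'2 : c' < m := by rw [hc']; linarith
  have hc'neg : c' < 0 := lt_of_lt_of_le hc'2 (min_le_right _ _)
  have hc'z : c' < z₀ := lt_of_lt_of_le hc'2 (min_le_left _ _)
  set B := Icc t₀ s ∩ ζ ⁻¹' (Ici c') with hB
  have hBne : B.Nonempty :=
    ⟨t₀, ⟨le_refl _, hst₀⟩, by rw [mem_preimage, hζ0]; exact mem_Ici.2 hc'z.le⟩
  have hBclosed : IsClosed B :=
    (hcont.mono Icc_subset_Ici_self).preimage_isClosed_of_isClosed isClosed_Icc isClosed_Ici
  have hBbdd : BddAbove B := ⟨s, fun x hx => hx.1.2⟩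
  set s₁ := sSup B with hs₁
  have hs₁B : s₁ ∈ B := hBclosed.csSup_mem hBne hBbdd
  have hs₁1 : t₀ ≤ s₁ := hs₁B.1.1
  have hs₁2 : s₁ ≤ s := hs₁B.1.2
  have hζs₁ : c' ≤ ζ s₁ := hs₁B.2
  have hs₁s : s₁ < s := by
    rcases eq_or_lt_of_le hs₁2 with h | h
    · exfalso; rw [h] at hζs₁; linarith
    · exact h
  have hafter : ∀ u, s₁ < u → u ≤ s → ζ u < c' := by
    intro u h1 h2
    by_contra h
    push_neg at h
    have hu : u ∈ B := ⟨⟨le_trans hs₁1 h1.le, h2⟩, h⟩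
    exact absurd (le_csSup hBbdd hu) (not_le.2 h1)
  have hmono : MonotoneOn ζ (Icc s₁ s) := by
    apply monotoneOn_of_deriv_nonneg (convex_Icc s₁ s) (hcont.mono (fun x hx => le_trans hs₁1 hx.1))
    · intro x hx
      rw [interior_Icc] at hx
      exact ((hDA x (lt_of_le_of_lt hs₁1 hx.1)).differentiableAt).differentiableWithinAt
    · intro x hx
      rw [interior_Icc] at hx
      have hx0 : t₀ < x := lt_of_le_of_lt hs₁1 hx.1
      have hd := hDA x hx0
      rw [hd.deriv]
      have h1 : -a < ζ x := hbefore x hx0.le hx.2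
      have h2 : ζ x < c' := hafter x hx.1 hx.2.le
      have hxpos : 0 < x := lt_trans ht₀ hx0
      have hAx : 0 < x / (1 + x ^ 2) := div_pos hxpos (by positivity)
      have hBx : 0 ≤ (1 + ζ x) / (a + ζ x) := div_nonneg (by linarith) (by linarith)
      have key : (0:ℝ) ≤ x / (1 + x ^ 2) * ((1 + ζ x) / (a + ζ x)) * (-ζ x) :=
        mul_nonneg (mul_nonneg hAx.le hBx) (by linarith)
      have heq : -(x / (1 + x ^ 2)) * ((1 + ζ x) / (a + ζ x)) * ζ x
          = x / (1 + x ^ 2) * ((1 + ζ x) / (a + ζ x)) * (-ζ x) := by ring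
      rw [heq]
      exact key
  have hfin := hmono (left_mem_Icc.2 hs₁s.le) (right_mem_Icc.2 hs₁s.le) hs₁s.le
  linarith

lemma stmt12_decay (a t₀ z₀ : ℝ) (ha0 : 0 < a) (ha1 : a ≤ 1) (ht₀ : 0 < t₀) (hz : -a < z₀)
    (ζ : ℝ → ℝ) (hζ0 : ζ t₀ = z₀)
    (hode : ∀ t ∈ Ici t₀, HasDerivWithinAt ζ
      (-(t / (1 + t ^ 2)) * ((1 + ζ t) / (a + ζ t)) * ζ t) (Ici t₀) t) :
    (∃ C : ℝ, ∀ t ∈ Ici t₀, |ζ t| ≤ C / Real.sqrt (1 + t ^ 2)) ∧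
      Tendsto ζ atTop (𝓝 0) := by
  have hinv := stmt12_inv a t₀ z₀ ha0 ha1 ht₀ hz ζ hζ0 hode
  have hcont : ContinuousOn ζ (Ici t₀) := fun t ht => (hode t ht).continuousWithinAt
  have hDA : ∀ x, t₀ < x → HasDerivAt ζ
      (-(x / (1 + x ^ 2)) * ((1 + ζ x) / (a + ζ x)) * ζ x) x :=
    fun x hx => (hode x (le_of_lt hx)).hasDerivAt (Ici_mem_nhds hx)
  set h : ℝ → ℝ := fun t => (ζ t) ^ 2 * (1 + t ^ 2) with hh
  have hanti : AntitoneOn h (Ici t₀) := by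
    have hder : ∀ x, t₀ < x →
        HasDerivAt h (-(2 * x * ζ x ^ 2 * ((1 - a) / (a + ζ x)))) x := by
      intro x hx
      have hax : 0 < a + ζ x := by have := hinv x hx.le; linarith
      have hx2 : (0:ℝ) < 1 + x ^ 2 := by positivity
      refine (((hDA x hx).pow 2).mul ((hasDerivAt_pow 2 x).const_add 1)).congr_deriv (Eq.symm ?_)
      simp only [Pi.pow_apply]
      field_simp
      ring
    apply antitoneOn_of_deriv_nonpos (convex_Ici t₀)
    · exact (hcont.pow 2).mul (continuous_const.add (continuous_pow 2)).continuousOn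
    · intro x hx
      rw [interior_Ici] at hx
      exact (hder x hx).differentiableAt.differentiableWithinAt
    · intro x hx
      rw [interior_Ici] at hx
      rw [(hder x hx).deriv]
      have hax : 0 < a + ζ x := by have := hinv x (mem_Ici.2 (le_of_lt (mem_Ioi.1 hx))); linarith
      have hxpos : 0 < x := lt_trans ht₀ hx
      apply neg_nonpos.2
      exact mul_nonneg (mul_nonneg (by linarith) (sq_nonneg _))
        (div_nonneg (by linarith) hax.le)
  have hbound : ∀ t ∈ Ici t₀, |ζ t| ≤ (|z₀| * Real.sqrt (1 + t₀ ^ 2)) / Real.sqrt (1 + t ^ 2) := by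
    intro t ht
    have hb : h t ≤ h t₀ := hanti self_mem_Ici ht ht
    have hsq : Real.sqrt (h t) ≤ Real.sqrt (h t₀) := Real.sqrt_le_sqrt hb
    have e1 : Real.sqrt (h t) = |ζ t| * Real.sqrt (1 + t ^ 2) := by
      simp only [hh]
      rw [Real.sqrt_mul (sq_nonneg _), Real.sqrt_sq_eq_abs]
    have e2 : Real.sqrt (h t₀) = |z₀| * Real.sqrt (1 + t₀ ^ 2) := by
      simp only [hh]
      rw [hζ0, Real.sqrt_mul (sq_nonneg _), Real.sqrt_sq_eq_abs]
    rw [e1, e2] at hsq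
    have hspos : 0 < Real.sqrt (1 + t ^ 2) := Real.sqrt_pos.2 (by positivity)
    rw [le_div_iff₀ hspos]
    exact hsq
  refine ⟨⟨|z₀| * Real.sqrt (1 + t₀ ^ 2), hbound⟩, ?_⟩
  have hsqt : Tendsto (fun t : ℝ => Real.sqrt (1 + t ^ 2)) atTop atTop := by
    apply tendsto_atTop_mono (fun t => ?_) tendsto_id
    calc (t : ℝ) ≤ |t| := le_abs_self t
    _ = Real.sqrt (t ^ 2) := (Real.sqrt_sq_eq_abs t).symm
    _ ≤ Real.sqrt (1 + t ^ 2) := Real.sqrt_le_sqrt (by linarith)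
  have hC : Tendsto (fun t : ℝ => (|z₀| * Real.sqrt (1 + t₀ ^ 2)) / Real.sqrt (1 + t ^ 2))
      atTop (𝓝 0) := Tendsto.div_atTop tendsto_const_nhds hsqt
  apply squeeze_zero_norm' ?_ hC
  filter_upwards [eventually_ge_atTop t₀] with t ht
  rw [Real.norm_eq_abs]
  exact hbound t ht


lemma stmt12_symm_deriv {F : ℝ → ℝ} (hm : StrictMono F) (hs : Function.Surjective F)
    {x F' : ℝ} (hF : HasDerivAt F F' ((StrictMono.orderIsoOfSurjective F hm hs).symm x))
    (hF' : F' ≠ 0) :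
    HasDerivAt (fun y => ((StrictMono.orderIsoOfSurjective F hm hs).symm y : ℝ)) F'⁻¹ x :=
  hF.of_local_left_inverse
    ((StrictMono.orderIsoOfSurjective F hm hs).symm.continuous.continuousAt) hF'
    (Filter.Eventually.of_forall fun y =>
      StrictMono.orderIsoOfSurjective_self_symm_apply F hm hs y)

lemma stmt12_g_deriv (K : ℝ) (t₀ : ℝ) (t : ℝ) :
    HasDerivAt (fun s : ℝ => K + (1/2) * Real.log (1 + t₀ ^ 2) - (1/2) * Real.log (1 + s ^ 2))
      (-(t / (1 + t ^ 2))) t := by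
  have h2 : (0:ℝ) < 1 + t ^ 2 := by positivity
  have hin : HasDerivAt (fun s : ℝ => 1 + s ^ 2) (2 * t) t := by
    simpa using (hasDerivAt_pow 2 t).const_add 1
  have hlog := (hin.log (ne_of_gt h2)).const_mul (1/2 : ℝ)
  have := (hasDerivAt_const t (K + (1/2) * Real.log (1 + t₀ ^ 2))).sub hlog
  refine this.congr_deriv (Eq.symm ?_)
  field_simp
  ring

lemma stmt12_exists_pos (a t₀ z₀ : ℝ) (ha0 : 0 < a) (ha1 : a < 1) (hz : 0 < z₀) :
    ∃ ζ : ℝ → ℝ, ζ t₀ = z₀ ∧ ∀ t ∈ Ici t₀,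
      HasDerivAt ζ (-(t / (1 + t ^ 2)) * ((1 + ζ t) / (a + ζ t)) * ζ t) t := by
  set F : ℝ → ℝ := fun y => a * y + (1 - a) * Real.log (1 + Real.exp y) with hF
  have hexp1 : ∀ y : ℝ, (0:ℝ) < 1 + Real.exp y := fun y => by positivity
  have hFd : ∀ y : ℝ, HasDerivAt F ((a + Real.exp y) / (1 + Real.exp y)) y := by
    intro y
    have h1 : HasDerivAt (fun y : ℝ => 1 + Real.exp y) (Real.exp y) y := by
      simpa using (Real.hasDerivAt_exp y).const_add 1
    have h2 := (h1.log (ne_of_gt (hexp1 y))).const_mul (1 - a)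
    have h3 := ((hasDerivAt_id y).const_mul a).add h2
    refine h3.congr_deriv (Eq.symm ?_)
    have := ne_of_gt (hexp1 y)
    field_simp
    ring
  have hFpos : ∀ y : ℝ, 0 < (a + Real.exp y) / (1 + Real.exp y) := fun y =>
    div_pos (by positivity) (hexp1 y)
  have hFm : StrictMono F := by
    apply strictMono_of_deriv_pos
    intro y
    rw [(hFd y).deriv]
    exact hFpos y
  have hFc : Continuous F := by
    have : Differentiable ℝ F := fun y => (hFd y).differentiableAt
    exact this.continuous
  have hFs : Function.Surjective F := by
    apply hFc.surjective
    · apply tendsto_atTop_mono (fun y => ?_) (tendsto_id.const_mul_atTop ha0)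
      have : 0 ≤ (1 - a) * Real.log (1 + Real.exp y) :=
        mul_nonneg (by linarith) (Real.log_nonneg (by nlinarith [Real.exp_pos y]))
      simp only [hF, id]
      linarith
    · apply tendsto_atBot_mono' atBot ?_
        (tendsto_atBot_add_const_right atBot ((1 - a) * Real.log 2)
          (tendsto_id.const_mul_atBot ha0))
      filter_upwards [eventually_le_atBot (0:ℝ)] with y hy
      have he : Real.exp y ≤ 1 := Real.exp_le_one_iff.2 hy
      have hlog : Real.log (1 + Real.exp y) ≤ Real.log 2 :=
        Real.log_le_log (hexp1 y) (by linarith)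
      have : (1 - a) * Real.log (1 + Real.exp y) ≤ (1 - a) * Real.log 2 :=
        mul_le_mul_of_nonneg_left hlog (by linarith)
      simp only [hF, id]
      linarith
  set K := F (Real.log z₀) with hK
  set g : ℝ → ℝ := fun t => K + (1/2) * Real.log (1 + t₀ ^ 2) - (1/2) * Real.log (1 + t ^ 2)
    with hg
  set e := StrictMono.orderIsoOfSurjective F hFm hFs with he
  set ζ : ℝ → ℝ := fun t => Real.exp (e.symm (g t)) with hζ
  have hζ0 : ζ t₀ = z₀ := by
    have h1 : g t₀ = F (Real.log z₀) := by simp only [hg]; ring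
    have h2 : e.symm (F (Real.log z₀)) = Real.log z₀ :=
      StrictMono.orderIsoOfSurjective_symm_apply_self F hFm hFs _
    simp only [hζ, h1, h2]
    exact Real.exp_log hz
  refine ⟨ζ, hζ0, ?_⟩
  intro t _
  set y := e.symm (g t) with hy
  have hgd := stmt12_g_deriv K t₀ t
  have hinv : HasDerivAt (fun w => (e.symm w : ℝ)) ((a + Real.exp y) / (1 + Real.exp y))⁻¹
      (g t) := stmt12_symm_deriv hFm hFs (hFd y) (ne_of_gt (hFpos y))
  have hcomp := hinv.comp t hgd
  have hζd := hcomp.exp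
  refine hζd.congr_deriv (Eq.symm ?_)
  have h1 : (0:ℝ) < 1 + Real.exp y := hexp1 y
  have h2 : (0:ℝ) < a + Real.exp y := by positivity
  have h3 : (0:ℝ) < 1 + t ^ 2 := by positivity
  simp only [hζ, Function.comp, ← hy]
  field_simp
lemma stmt12_exists_neg (a t₀ z₀ : ℝ) (ha0 : 0 < a) (ha1 : a < 1) (ht₀ : 0 < t₀)
    (hz0 : z₀ < 0) (hza : -a < z₀) :
    ∃ ζ : ℝ → ℝ, ζ t₀ = z₀ ∧ ∀ t ∈ Ici t₀,
      HasDerivAt ζ (-(t / (1 + t ^ 2)) * ((1 + ζ t) / (a + ζ t)) * ζ t) t := by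
  have ha1' : 0 < 1 - a := by linarith
  set ψ : ℝ → ℝ := fun y => -(a * Real.exp y / (Real.exp y + 1)) with hψdef
  set Ψ : ℝ → ℝ := fun y => a * Real.log a + a * y
      + (1 - a) * Real.log ((1 - a) * Real.exp y + 1) - Real.log (Real.exp y + 1) with hΨdef
  set b := a * Real.log a + (1 - a) * Real.log (1 - a) with hb
  have hE : ∀ y : ℝ, (0:ℝ) < Real.exp y + 1 := fun y => by positivity
  have hE2 : ∀ y : ℝ, (0:ℝ) < (1 - a) * Real.exp y + 1 := fun y => by
    nlinarith [Real.exp_pos y]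
  have hΨd : ∀ y : ℝ, HasDerivAt Ψ
      (a / (((1 - a) * Real.exp y + 1) * (Real.exp y + 1))) y := by
    intro y
    have h1 : HasDerivAt (fun y : ℝ => (1 - a) * Real.exp y + 1) ((1 - a) * Real.exp y) y :=
      ((Real.hasDerivAt_exp y).const_mul (1 - a)).add_const 1
    have h2 : HasDerivAt (fun y : ℝ => Real.exp y + 1) (Real.exp y) y :=
      (Real.hasDerivAt_exp y).add_const 1
    have h3 := (h1.log (ne_of_gt (hE2 y))).const_mul (1 - a)
    have h4 := h2.log (ne_of_gt (hE y))
    have h5 := (((hasDerivAt_id y).const_mul a).const_add (a * Real.log a)).add h3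
    have h6 := h5.sub h4
    refine h6.congr_deriv (Eq.symm ?_)
    field_simp
    ring
  have hΨdpos : ∀ y : ℝ, 0 < a / (((1 - a) * Real.exp y + 1) * (Real.exp y + 1)) :=
    fun y => div_pos ha0 (mul_pos (hE2 y) (hE y))
  have hΨm : StrictMono Ψ := by
    apply strictMono_of_deriv_pos
    intro y
    rw [(hΨd y).deriv]
    exact hΨdpos y
  have hΨc : Continuous Ψ := by
    have : Differentiable ℝ Ψ := fun y => (hΨd y).differentiableAt
    exact this.continuous
  have hΨalt : ∀ y : ℝ, Ψ y = a * Real.log a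
      + (1 - a) * Real.log (1 - a + Real.exp (-y)) - Real.log (1 + Real.exp (-y)) := by
    intro y
    have hne1 : (1:ℝ) - a + Real.exp (-y) ≠ 0 := by nlinarith [Real.exp_pos (-y)]
    have hne2 : (1:ℝ) + Real.exp (-y) ≠ 0 := by nlinarith [Real.exp_pos (-y)]
    have e1 : (1 - a) * Real.exp y + 1 = Real.exp y * (1 - a + Real.exp (-y)) := by
      rw [Real.exp_neg]
      field_simp
    have e2 : Real.exp y + 1 = Real.exp y * (1 + Real.exp (-y)) := by
      rw [Real.exp_neg]
      field_simp
    simp only [hΨdef]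
    rw [e1, e2, Real.log_mul (Real.exp_ne_zero y) hne1,
      Real.log_mul (Real.exp_ne_zero y) hne2, Real.log_exp]
    ring
  have hΨtop : Tendsto Ψ atTop (𝓝 b) := by
    have h0 : Tendsto (fun y : ℝ => Real.exp (-y)) atTop (𝓝 0) :=
      Real.tendsto_exp_atBot.comp tendsto_neg_atTop_atBot
    have l1 : Tendsto (fun y : ℝ => Real.log (1 - a + Real.exp (-y))) atTop
        (𝓝 (Real.log (1 - a))) := by
      have hadd : Tendsto (fun y : ℝ => 1 - a + Real.exp (-y)) atTop (𝓝 (1 - a)) := by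
        simpa using tendsto_const_nhds.add h0
      exact (Real.continuousAt_log (ne_of_gt ha1')).tendsto.comp hadd
    have l2 : Tendsto (fun y : ℝ => Real.log (1 + Real.exp (-y))) atTop (𝓝 0) := by
      have hadd : Tendsto (fun y : ℝ => 1 + Real.exp (-y)) atTop (𝓝 1) := by
        simpa using tendsto_const_nhds.add h0
      have := (Real.continuousAt_log one_ne_zero).tendsto.comp hadd
      simpa [Function.comp_def] using this
    have hc : Tendsto (fun _ : ℝ => a * Real.log a) atTop (𝓝 (a * Real.log a)) :=
      tendsto_const_nhds
    have hfin := (hc.add (l1.const_mul (1 - a))).sub l2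
    have : Tendsto (fun y : ℝ => a * Real.log a
        + (1 - a) * Real.log (1 - a + Real.exp (-y)) - Real.log (1 + Real.exp (-y)))
        atTop (𝓝 b) := by
      simpa [hb] using hfin
    exact this.congr (fun y => (hΨalt y).symm)
  have hΨlt : ∀ y : ℝ, Ψ y < b := fun y =>
    lt_of_lt_of_le (hΨm (lt_add_one y)) (hΨm.monotone.ge_of_tendsto hΨtop (y + 1))
  have hΨbot : Tendsto Ψ atBot atBot := by
    apply tendsto_atBot_mono' atBot ?_
      (tendsto_atBot_add_const_right atBot (a * Real.log a)
        (tendsto_id.const_mul_atBot ha0))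
    refine Eventually.of_forall fun y => ?_
    have k1 : Real.log ((1 - a) * Real.exp y + 1) ≤ Real.log (Real.exp y + 1) :=
      Real.log_le_log (hE2 y) (by nlinarith [Real.exp_pos y])
    have k2 : 0 ≤ Real.log (Real.exp y + 1) := Real.log_nonneg (by nlinarith [Real.exp_pos y])
    have k3 := mul_le_mul_of_nonneg_left k1 (le_of_lt ha1')
    simp only [hΨdef, id]
    nlinarith [mul_nonneg ha0.le k2]
  set H : ℝ → ℝ := fun y => -Real.log (b - Ψ y) with hHdef
  have hbΨ : ∀ y : ℝ, 0 < b - Ψ y := fun y => sub_pos.2 (hΨlt y)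
  have hHm : StrictMono H := by
    intro y y' hyy
    have h1 : Ψ y < Ψ y' := hΨm hyy
    have h2 := Real.log_lt_log (hbΨ y') (by linarith : b - Ψ y' < b - Ψ y)
    simp only [hHdef]
    linarith
  have hHs : Function.Surjective H := by
    intro z
    have hw : b - Real.exp (-z) < b := by nlinarith [Real.exp_pos (-z)]
    obtain ⟨y₁, hy₁⟩ := (hΨbot.eventually (eventually_le_atBot (b - Real.exp (-z)))).exists
    obtain ⟨y₂, hy₂⟩ := (hΨtop.eventually (eventually_gt_nhds hw)).exists
    obtain ⟨y, hy⟩ := intermediate_value_univ y₁ y₂ hΨc ⟨hy₁, hy₂.le⟩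
    refine ⟨y, ?_⟩
    simp only [hHdef, hy]
    rw [show b - (b - Real.exp (-z)) = Real.exp (-z) by ring, Real.log_exp]
    ring
  have hHd : ∀ y : ℝ, HasDerivAt H
      ((a / (((1 - a) * Real.exp y + 1) * (Real.exp y + 1))) / (b - Ψ y)) y := by
    intro y
    have h1 := (hasDerivAt_const y b).sub (hΨd y)
    have h3 := (h1.log (ne_of_gt (hbΨ y))).neg
    refine h3.congr_deriv (Eq.symm ?_)
    simp only [Pi.sub_apply]
    ring
  have hHdpos : ∀ y : ℝ,
      0 < (a / (((1 - a) * Real.exp y + 1) * (Real.exp y + 1))) / (b - Ψ y) :=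
    fun y => div_pos (hΨdpos y) (hbΨ y)
  -- initial point
  set E₀ := -z₀ / (a + z₀) with hE₀
  have hE₀pos : 0 < E₀ := div_pos (by linarith) (by linarith)
  set y₀ := Real.log E₀ with hy₀
  have hexpy₀ : Real.exp y₀ = E₀ := Real.exp_log hE₀pos
  have haz : a + z₀ ≠ 0 := by linarith
  have hψy₀ : ψ y₀ = z₀ := by
    have hE₀1 : E₀ + 1 = a / (a + z₀) := by
      rw [hE₀]
      field_simp
      ring
    simp only [hψdef, hexpy₀, hE₀1, hE₀]
    have := ha0.ne'
    field_simp
    ring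
    field_simp
  set g : ℝ → ℝ := fun t => Ψ y₀ + (1/2) * Real.log (1 + t₀ ^ 2)
      - (1/2) * Real.log (1 + t ^ 2) with hg
  set G : ℝ → ℝ := fun t => -Real.log (b - g t) with hG
  set eH := StrictMono.orderIsoOfSurjective H hHm hHs with heH
  set ζ : ℝ → ℝ := fun t => ψ (eH.symm (G t)) with hζ
  have hζ0 : ζ t₀ = z₀ := by
    have h1 : g t₀ = Ψ y₀ := by simp only [hg]; ring
    have h2 : G t₀ = H y₀ := by simp only [hG, hHdef, h1]
    have h3 : eH.symm (H y₀) = y₀ :=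
      StrictMono.orderIsoOfSurjective_symm_apply_self H hHm hHs y₀
    simp only [hζ, h2, h3, hψy₀]
  refine ⟨ζ, hζ0, ?_⟩
  intro t ht
  have htpos : 0 < t := lt_of_lt_of_le ht₀ (mem_Ici.1 ht)
  have hgt : g t ≤ Ψ y₀ := by
    simp only [hg]
    have h1 : Real.log (1 + t₀ ^ 2) ≤ Real.log (1 + t ^ 2) := by
      apply Real.log_le_log (by positivity)
      nlinarith [mem_Ici.1 ht]
    linarith
  have hgb : 0 < b - g t := by have := hΨlt y₀; linarith
  set y := eH.symm (G t) with hy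
  have hHy : H y = G t := StrictMono.orderIsoOfSurjective_self_symm_apply H hHm hHs (G t)
  have hΨy : Ψ y = g t := by
    simp only [hHdef, hG] at hHy
    have h2 : Real.log (b - Ψ y) = Real.log (b - g t) := by linarith
    have h3 := Real.log_injOn_pos (mem_Ioi.2 (hbΨ y)) (mem_Ioi.2 hgb) h2
    linarith
  have hgd : HasDerivAt g (-(t / (1 + t ^ 2))) t := stmt12_g_deriv (Ψ y₀) t₀ t
  have hGd : HasDerivAt G (-((t / (1 + t ^ 2)) / (b - g t))) t := by
    have h1 : HasDerivAt (fun s => b - g s) (t / (1 + t ^ 2)) t := by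
      have := (hasDerivAt_const t b).sub hgd
      exact this.congr_deriv (by ring)
    exact (h1.log (ne_of_gt hgb)).neg
  have hinv : HasDerivAt (fun w => (eH.symm w : ℝ))
      ((a / (((1 - a) * Real.exp y + 1) * (Real.exp y + 1)) / (b - Ψ y)))⁻¹ (G t) :=
    stmt12_symm_deriv hHm hHs (hHd y) (ne_of_gt (hHdpos y))
  have hcomp := hinv.comp t hGd
  have hψd : HasDerivAt ψ (-(a * Real.exp y / (Real.exp y + 1) ^ 2)) y := by
    have h1 : HasDerivAt (fun y => a * Real.exp y) (a * Real.exp y) y :=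
      (Real.hasDerivAt_exp y).const_mul a
    have h2 : HasDerivAt (fun y : ℝ => Real.exp y + 1) (Real.exp y) y :=
      (Real.hasDerivAt_exp y).add_const 1
    have h3 := (h1.div h2 (ne_of_gt (hE y))).neg
    refine h3.congr_deriv (Eq.symm ?_)
    field_simp
    ring
  have hζd := hψd.comp t hcomp
  refine hζd.congr_deriv (Eq.symm ?_)
  have k1 : (0:ℝ) < Real.exp y + 1 := hE y
  have k2 : (0:ℝ) < (1 - a) * Real.exp y + 1 := hE2 y
  have k3 : (0:ℝ) < 1 + t ^ 2 := by positivity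
  have k4 : (0:ℝ) < b - Ψ y := hbΨ y
  simp only [hζ, ← hy, hψdef]
  rw [hΨy] at k4 ⊢
  have k1' : Real.exp y + 1 ≠ 0 := ne_of_gt k1
  have r1 : a + -(a * Real.exp y / (Real.exp y + 1)) = a / (Real.exp y + 1) := by
    field_simp
    ring
  have r2 : 1 + -(a * Real.exp y / (Real.exp y + 1))
      = ((1 - a) * Real.exp y + 1) / (Real.exp y + 1) := by
    field_simp
    ring
  rw [r1, r2]
  have k2' : (1 - a) * Real.exp y + 1 ≠ 0 := ne_of_gt k2
  have k3' : (1:ℝ) + t ^ 2 ≠ 0 := ne_of_gt k3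
  have k4' : b - g t ≠ 0 := ne_of_gt k4
  field_simp

/-- In the inverse-Gauss-map gauge, the spherically symmetric evolution
`ζ' = −(t/(1+t²))·((1+ζ)/(1/(d+1)+ζ))·ζ` with data `ζ(t₀) > −1/(d+1)` at `t₀ > 0` has a
global solution on `[t₀, ∞)`, and every such solution decays like `1/√(1+t²)`; in
particular `ζ(t) → 0`. -/
theorem stmt12 (d : ℕ) (hd : 1 ≤ d) (t₀ z₀ : ℝ) (ht₀ : 0 < t₀)
    (hz : -1 / ((d : ℝ) + 1) < z₀) :
    (∃ ζ : ℝ → ℝ, ζ t₀ = z₀ ∧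
      ∀ t ∈ Set.Ici t₀,
        HasDerivWithinAt ζ
          (-(t / (1 + t ^ 2)) * ((1 + ζ t) / (1 / ((d : ℝ) + 1) + ζ t)) * ζ t)
          (Set.Ici t₀) t) ∧
    ∀ ζ : ℝ → ℝ, ζ t₀ = z₀ →
      (∀ t ∈ Set.Ici t₀,
        HasDerivWithinAt ζ
          (-(t / (1 + t ^ 2)) * ((1 + ζ t) / (1 / ((d : ℝ) + 1) + ζ t)) * ζ t)
          (Set.Ici t₀) t) →
      (∃ C : ℝ, ∀ t ∈ Set.Ici t₀, |ζ t| ≤ C / Real.sqrt (1 + t ^ 2)) ∧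
      Filter.Tendsto ζ Filter.atTop (nhds 0) := by
  have hd1 : (1:ℝ) ≤ (d:ℝ) := by exact_mod_cast hd
  have hdpos : (0:ℝ) < (d:ℝ) + 1 := by linarith
  set a : ℝ := 1 / ((d : ℝ) + 1) with ha
  have ha0 : 0 < a := by rw [ha]; positivity
  have ha1 : a < 1 := by rw [ha, div_lt_one hdpos]; linarith
  have hza : -a < z₀ := by rw [ha, ← neg_div]; exact hz
  constructor
  · rcases lt_trichotomy z₀ 0 with hneg | hzero | hpos
    · obtain ⟨ζ, h0, hd'⟩ := stmt12_exists_neg a t₀ z₀ ha0 ha1 ht₀ hneg hza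
      exact ⟨ζ, h0, fun t ht => (hd' t ht).hasDerivWithinAt⟩
    · refine ⟨fun _ => 0, hzero.symm, fun t ht => ?_⟩
      simpa using hasDerivWithinAt_const t (Set.Ici t₀) (0:ℝ)
    · obtain ⟨ζ, h0, hd'⟩ := stmt12_exists_pos a t₀ z₀ ha0 ha1 hpos
      exact ⟨ζ, h0, fun t ht => (hd' t ht).hasDerivWithinAt⟩
  · intro ζ hζ0 hode
    exact stmt12_decay a t₀ z₀ ha0 ha1.le ht₀ hza ζ hζ0 hode
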